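/- arXiv:2202.09600 — 3 statements merged into one kernel-verified Lean document; each statement's English description precedes it below -/
import Mathlib

section
/- Let (R, F) be a tamely filtered k-algebra, meaning F is a decreasing multiplicative Z-filtration with F^{≥0}R = R and F^{≥m}R = F^{≥1}R for all m ≥ 1. Then the Rees algebra ⊕_m F^{≥m}R (with F^{≥m}R placed in degree m, summing over all m ∈ Z with F^{≥m}R = R for m ≤ 0) is a finitely generated k-algebra if and only if R is a finitely generated k-algebra and the ideal F^{≥1}R ⊆ R is idempotent. -/
/-- The Rees algebra `⊕ₘ F^{≥m}R ⊆ R[t, t⁻¹]` of the *tame* filtration on `R` associated to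
an ideal `I`: `F^{≥m}R = R` for `m ≤ 0` and `F^{≥m}R = I` for `m ≥ 1`.  It is realized as
the `k`-subalgebra of the Laurent polynomial ring `AddMonoidAlgebra R ℤ` of elements whose
coefficients in positive degrees lie in `I`. -/
def tameRees (k R : Type*) [CommSemiring k] [CommRing R] [Algebra k R] (I : Ideal R) :
    Subalgebra k (AddMonoidAlgebra R ℤ) where
  carrier := {p | ∀ m : ℤ, 0 < m → p.coeff m ∈ I}
  add_mem' {p q} hp hq m hm := by
    simpa [AddMonoidAlgebra.coeff_add] using I.add_mem (hp m hm) (hq m hm)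
  mul_mem' {p q} hp hq m hm := by
    classical
    rw [AddMonoidAlgebra.coeff_mul]
    refine Submodule.sum_mem _ fun a₁ ha₁ => Submodule.sum_mem _ fun a₂ ha₂ => ?_
    by_cases h : a₁ + a₂ = m
    · rcases lt_or_ge 0 a₁ with h1 | h1
      · simpa [h] using Ideal.mul_mem_right _ I (hp a₁ h1)
      · have h2 : 0 < a₂ := by omega
        simpa [h] using Ideal.mul_mem_left _ _ (hq a₂ h2)
    · simp [h]
  algebraMap_mem' c m hm := by
    have h1 : (algebraMap k (AddMonoidAlgebra R ℤ) c).coeff m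
        = Finsupp.single (0 : ℤ) (algebraMap k R c) m := by
      first | (rw [AddMonoidAlgebra.coe_algebraMap]; rfl) | rfl
    have h2 : Finsupp.single (0 : ℤ) (algebraMap k R c) m = 0 :=
      Finsupp.single_eq_of_ne (by omega)
    show (algebraMap k (AddMonoidAlgebra R ℤ) c).coeff m ∈ I
    rw [h1, h2]
    exact I.zero_mem

theorem mem_tameRees_iff {k R : Type*} [CommSemiring k] [CommRing R] [Algebra k R]
    {I : Ideal R} {p : AddMonoidAlgebra R ℤ} :
    p ∈ tameRees k R I ↔ ∀ m : ℤ, 0 < m → p.coeff m ∈ I := Iff.rfl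

theorem lift_single {R : Type*} [CommRing R] (a : ℤ) (b : R) :
    AddMonoidAlgebra.liftNCRingHom (RingHom.id R) 1 (fun _ _ => Commute.all _ _)
      (AddMonoidAlgebra.single a b) = b := by
  show AddMonoidAlgebra.liftNC _ _ (AddMonoidAlgebra.single a b) = b
  rw [AddMonoidAlgebra.liftNC_single]
  simp

/-- Evaluation at `t = 1` as a `k`-algebra homomorphism `R[t,t⁻¹] → R`. -/
noncomputable def evalOneHom (k R : Type*) [CommSemiring k] [CommRing R] [Algebra k R] :
    AddMonoidAlgebra R ℤ →ₐ[k] R :=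
  { AddMonoidAlgebra.liftNCRingHom (RingHom.id R) 1 (fun _ _ => Commute.all _ _) with
    commutes' := fun c => by
      show AddMonoidAlgebra.liftNCRingHom (RingHom.id R) 1 (fun _ _ => Commute.all _ _)
        (algebraMap k (AddMonoidAlgebra R ℤ) c) = algebraMap k R c
      have h : (algebraMap k (AddMonoidAlgebra R ℤ) c)
          = AddMonoidAlgebra.single (0 : ℤ) (algebraMap k R c) := by
        rw [AddMonoidAlgebra.coe_algebraMap]; rfl
      rw [h, lift_single] }

theorem evalOneHom_single {k R : Type*} [CommSemiring k] [CommRing R] [Algebra k R]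
    (a : ℤ) (b : R) : evalOneHom k R (AddMonoidAlgebra.single a b) = b := lift_single a b

/-- For a tamely filtered `k`-algebra `(R, F)` (so `F^{≥0}R = R` and
`F^{≥m}R = F^{≥1}R =: I` for `m ≥ 1`), the Rees algebra `⊕ₘ F^{≥m}R` is a finitely
generated `k`-algebra if and only if `R` is a finitely generated `k`-algebra and the ideal
`I = F^{≥1}R` is idempotent. -/
theorem stmt_4 (k R : Type*) [Field k] [CommRing R] [Algebra k R] (I : Ideal R) :
    (tameRees k R I).FG ↔ (⊤ : Subalgebra k R).FG ∧ I * I = I := by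
  classical
  constructor
  · rintro hFG
    obtain ⟨s, hs⟩ := id hFG
    constructor
    · -- `R` is finitely generated: it is the image of the Rees algebra under evaluation at 1
      have hmap : (tameRees k R I).map (evalOneHom k R) = ⊤ := by
        refine le_antisymm le_top fun r _ => ?_
        refine Subalgebra.mem_map.mpr
          ⟨AddMonoidAlgebra.single (0 : ℤ) r, ?_, evalOneHom_single 0 r⟩
        intro m hm
        show Finsupp.single (0 : ℤ) r m ∈ I
        rw [Finsupp.single_eq_of_ne (by omega)]
        exact I.zero_mem
      have h := hFG.map (evalOneHom k R)
      rwa [hmap] at h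
    · -- idempotence
      refine le_antisymm (Ideal.mul_le_left) ?_
      set Nn : ℕ := (s.sup fun g => g.coeff.support.sup fun m => m.toNat) + 1 with hNn
      set N : ℤ := (Nn : ℤ) with hN
      have hbound : ∀ g ∈ s, ∀ m : ℤ, N ≤ m → g.coeff m = 0 := by
        intro g hg m hm
        by_contra hne
        have hsupp : m ∈ g.coeff.support := Finsupp.mem_support_iff.mpr hne
        have h2 : (g.coeff.support.sup fun m => m.toNat) < Nn :=
          Nat.lt_succ_of_le (Finset.le_sup (f := fun g : AddMonoidAlgebra R ℤ =>
            g.coeff.support.sup fun m => m.toNat) hg)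
        have h3 : m.toNat < Nn := lt_of_le_of_lt
          (Finset.le_sup (f := fun m : ℤ => m.toNat) hsupp) h2
        omega
      have key : ∀ p, p ∈ Algebra.adjoin k (s : Set (AddMonoidAlgebra R ℤ)) →
          ∀ m : ℤ, N ≤ m → p.coeff m ∈ I * I := by
        intro p hp
        induction hp using Algebra.adjoin_induction with
        | mem g hg => intro m hm; rw [hbound g hg m hm]; exact Submodule.zero_mem _
        | algebraMap r =>
          intro m hm
          have h1 : (algebraMap k (AddMonoidAlgebra R ℤ) r).coeff m
              = Finsupp.single (0 : ℤ) (algebraMap k R r) m := by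
            rw [AddMonoidAlgebra.coe_algebraMap]; rfl
          have h2 : Finsupp.single (0 : ℤ) (algebraMap k R r) m = 0 :=
            Finsupp.single_eq_of_ne (by omega)
          rw [h1, h2]; exact Submodule.zero_mem _
        | add x y hx hy ihx ihy =>
          intro m hm
          have h : (x + y).coeff m = x.coeff m + y.coeff m := rfl
          rw [h]
          exact Submodule.add_mem _ (ihx m hm) (ihy m hm)
        | mul x y hx hy ihx ihy =>
          intro m hm
          have hx' : x ∈ tameRees k R I := by rwa [← hs]
          have hy' : y ∈ tameRees k R I := by rwa [← hs]
          rw [AddMonoidAlgebra.mul_apply]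
          refine Submodule.sum_mem _ fun a₁ ha₁ => Submodule.sum_mem _ fun a₂ ha₂ => ?_
          by_cases h : a₁ + a₂ = m
          · rcases le_or_gt N a₁ with h1 | h1
            · simpa [h] using Ideal.mul_mem_right _ _ (ihx a₁ h1)
            · rcases le_or_gt N a₂ with h2 | h2
              · simpa [h] using Ideal.mul_mem_left _ _ (ihy a₂ h2)
              · have hp1 : 0 < a₁ := by omega
                have hp2 : 0 < a₂ := by omega
                simpa [h] using Ideal.mul_mem_mul (hx' a₁ hp1) (hy' a₂ hp2)
          · simp [h]
      intro x hx
      have hmem : AddMonoidAlgebra.single N x ∈ tameRees k R I := by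
        intro m hm
        show Finsupp.single N x m ∈ I
        by_cases h : N = m
        · rwa [h, Finsupp.single_eq_same] at *
        · rw [Finsupp.single_eq_of_ne' h]; exact I.zero_mem
      rw [← hs] at hmem
      have hfin := key _ hmem N le_rfl
      have hNN : (AddMonoidAlgebra.single N x : AddMonoidAlgebra R ℤ).coeff N = x :=
        Finsupp.single_eq_same
      rwa [hNN] at hfin
  · rintro ⟨hR, hI⟩
    -- `R` is Noetherian, so `I` is finitely generated
    haveI : Algebra.FiniteType k R := ⟨hR⟩
    haveI : IsNoetherianRing R := Algebra.FiniteType.isNoetherianRing k R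
    obtain ⟨sR, hsR⟩ := hR
    obtain ⟨sI, hsI⟩ := (IsNoetherian.noetherian I : I.FG)
    set S : Set (AddMonoidAlgebra R ℤ) :=
      (fun r => AddMonoidAlgebra.single (0 : ℤ) r) '' ↑sR
        ∪ {AddMonoidAlgebra.single (-1 : ℤ) 1}
        ∪ (fun r => AddMonoidAlgebra.single (1 : ℤ) r) '' ↑sI with hS
    have hSfin : S.Finite := by
      apply Set.Finite.union
      apply Set.Finite.union
      · exact (sR.finite_toSet).image _
      · exact Set.finite_singleton _
      · exact (sI.finite_toSet).image _
    rw [Subalgebra.fg_def]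
    refine ⟨S, hSfin, le_antisymm (Algebra.adjoin_le ?_) ?_⟩
    · -- each generator is in the Rees algebra
      rintro p ((⟨r, hr, rfl⟩ | rfl) | ⟨r, hr, rfl⟩) <;> intro m hm
      · show Finsupp.single (0 : ℤ) r m ∈ I
        rw [Finsupp.single_eq_of_ne (by omega)]; exact I.zero_mem
      · show Finsupp.single (-1 : ℤ) (1 : R) m ∈ I
        rw [Finsupp.single_eq_of_ne (by omega)]; exact I.zero_mem
      · show Finsupp.single (1 : ℤ) r m ∈ I
        by_cases h : (1 : ℤ) = m
        · rw [← h, Finsupp.single_eq_same]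
          exact hsI ▸ Ideal.subset_span hr
        · rw [Finsupp.single_eq_of_ne' h]; exact I.zero_mem
    · -- the Rees algebra is contained in the adjoin
      have hzero : ∀ r : R, AddMonoidAlgebra.single (0 : ℤ) r ∈ Algebra.adjoin k S := by
        intro r
        have h1 : r ∈ (⊤ : Subalgebra k R) := trivial
        rw [← hsR] at h1
        have h2 : (AddMonoidAlgebra.singleZeroAlgHom (R := k) (A := R) (M := ℤ)) r ∈
            (Algebra.adjoin k (↑sR : Set R)).map AddMonoidAlgebra.singleZeroAlgHom :=
          Subalgebra.mem_map.mpr ⟨r, h1, rfl⟩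
        rw [AlgHom.map_adjoin] at h2
        refine Algebra.adjoin_mono ?_ h2
        rintro _ ⟨x, hx, rfl⟩
        exact Or.inl (Or.inl ⟨x, hx, rfl⟩)
      have hone : ∀ x ∈ I, AddMonoidAlgebra.single (1 : ℤ) x ∈ Algebra.adjoin k S := by
        intro x hx
        rw [← hsI] at hx
        induction hx using Submodule.span_induction with
        | mem y hy => exact Algebra.subset_adjoin (Or.inr ⟨y, hy, rfl⟩)
        | zero => rw [AddMonoidAlgebra.single_zero]; exact Subalgebra.zero_mem _
        | add y z hy hz ihy ihz =>
          rw [AddMonoidAlgebra.single_add]; exact Subalgebra.add_mem _ ihy ihz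
        | smul c y hy ihy =>
          have heq : AddMonoidAlgebra.single (1 : ℤ) (c • y)
              = AddMonoidAlgebra.single (0 : ℤ) c * AddMonoidAlgebra.single (1 : ℤ) y := by
            rw [AddMonoidAlgebra.single_mul_single, zero_add, smul_eq_mul]
          rw [heq]
          exact Subalgebra.mul_mem _ (hzero c) ihy
      have hpos : ∀ n : ℕ, ∀ x ∈ I,
          AddMonoidAlgebra.single ((n : ℤ) + 1) x ∈ Algebra.adjoin k S := by
        intro n
        induction n with
        | zero => simpa using hone
        | succ n ih =>
          intro x hx
          rw [← hI] at hx
          rw [show ((n + 1 : ℕ) : ℤ) + 1 = ((n : ℤ) + 1) + 1 by push_cast; ring]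
          refine Submodule.mul_induction_on hx ?_ ?_
          · intro a ha b hb
            have heq : AddMonoidAlgebra.single ((n : ℤ) + 1 + 1) (a * b)
                = AddMonoidAlgebra.single ((n : ℤ) + 1) a
                  * AddMonoidAlgebra.single (1 : ℤ) b := by
              rw [AddMonoidAlgebra.single_mul_single]
            rw [heq]
            exact Subalgebra.mul_mem _ (ih a ha) (hone b hb)
          · intro a b iha ihb
            rw [AddMonoidAlgebra.single_add]
            exact Subalgebra.add_mem _ iha ihb
      have hsingle : ∀ (m : ℤ) (r : R), (0 < m → r ∈ I) →
          AddMonoidAlgebra.single m r ∈ Algebra.adjoin k S := by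
        intro m r hmr
        rcases lt_or_ge 0 m with hm | hm
        · obtain ⟨n, rfl⟩ : ∃ n : ℕ, m = (n : ℤ) + 1 :=
            ⟨(m - 1).toNat, by omega⟩
          exact hpos n r (hmr hm)
        · have hpow : (AddMonoidAlgebra.single (-1 : ℤ) (1 : R)) ^ (-m).toNat
              = AddMonoidAlgebra.single m (1 : R) := by
            rw [AddMonoidAlgebra.single_pow, one_pow]
            congr 1
            rw [nsmul_eq_mul]
            omega
          have heq : AddMonoidAlgebra.single m r
              = AddMonoidAlgebra.single (0 : ℤ) r
                * (AddMonoidAlgebra.single (-1 : ℤ) (1 : R)) ^ (-m).toNat := by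
            rw [hpow, AddMonoidAlgebra.single_mul_single, zero_add, mul_one]
          have hmemS : AddMonoidAlgebra.single (-1 : ℤ) (1 : R) ∈ S :=
            Or.inl (Or.inr rfl)
          rw [heq]
          exact Subalgebra.mul_mem _ (hzero r)
            (Subalgebra.pow_mem _ (Algebra.subset_adjoin hmemS) _)
      intro p hp
      have hrepr : p = p.coeff.support.sum fun m => AddMonoidAlgebra.single m (p.coeff m) :=
        (AddMonoidAlgebra.sum_coeff_single p).symm
      rw [hrepr]
      exact Subalgebra.sum_mem _ fun m _ => hsingle m (p.coeff m) (fun h => hp m h)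
end

section
/- Let (R, F) be a filtered commutative k-algebra whose Rees algebra ⊕_m F^{≥m}R is a finitely generated integral domain over k. Suppose there exist elements t_1, …, t_ℓ generating the subring ⊕_{m≥0} F^{≥m}R, with positive degrees among t_1, …, t_{ℓ_0} and let I = (t_1, …, t_{ℓ_0}) be the ideal of F^{≥0}R they generate, and let d = max_i deg(t_i) > 0. Then for all m ≥ 0 one has I^m ⊆ F^{≥m}R ⊆ I^{⌊m/d⌋}, and consequently F^{∞}R := ∩_m F^{≥m}R equals ∩_m I^m; by the Krull Intersection Theorem, F^∞R is either the zero ideal or all of F^{≥0}R. -/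
/-- Let `(R, F)` be a filtered commutative `k`-algebra whose Rees algebra is a
finitely generated integral domain over `k`.  We work inside the degree-zero part
`A = F^{≥0}R` (an integral domain, finitely generated over `k`), where each `F^{≥m}R`
(`m ≥ 0`) is an ideal of `A`.  Suppose `t₁, …, t_ℓ ∈ A` are homogeneous generators
(`tᵢ ∈ F^{≥ dᵢ}` with `dᵢ ≥ 0`) of the nonnegatively graded part, so that for `m > 0`,
`F^{≥m}` is generated by the monomials `∏ tᵢ^{eᵢ}` with `∑ eᵢ dᵢ = m`; let
`I = (tᵢ : dᵢ > 0)` and `D = maxᵢ dᵢ > 0`.  Then for all `m ≥ 0`,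
`Iᵐ ⊆ F^{≥m} ⊆ I^{⌊m/D⌋}`; consequently `F^∞ = ∩ₘ F^{≥m} = ∩ₘ Iᵐ`, and by the Krull
Intersection Theorem `F^∞` is either the zero ideal or everything. -/
theorem stmt_6 (k A : Type*) [Field k] [CommRing A] [IsDomain A] [Algebra k A]
    (hfg : (⊤ : Subalgebra k A).FG)
    (F : ℕ → Ideal A)
    (hF0 : F 0 = ⊤)
    (hanti : ∀ m : ℕ, F (m + 1) ≤ F m)
    (hmul : ∀ i j : ℕ, F i * F j ≤ F (i + j))
    (ℓ : ℕ) (t : Fin ℓ → A) (d : Fin ℓ → ℕ)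
    (ht : ∀ i, t i ∈ F (d i))
    (hgen : ∀ m : ℕ, 0 < m →
      F m = Ideal.span
        {x : A | ∃ e : Fin ℓ → ℕ, (∑ i, e i * d i) = m ∧ x = ∏ i, t i ^ e i})
    (I : Ideal A) (hI : I = Ideal.span {x : A | ∃ i, 0 < d i ∧ x = t i})
    (D : ℕ) (hD : ∀ i, d i ≤ D) (hDmax : ∃ i, d i = D) (hDpos : 0 < D) :
    (∀ m : ℕ, I ^ m ≤ F m ∧ F m ≤ I ^ (m / D)) ∧
      (⨅ m : ℕ, F m) = (⨅ m : ℕ, I ^ m) ∧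
      ((⨅ m : ℕ, F m) = ⊥ ∨ (⨅ m : ℕ, F m) = ⊤) := by
  have hNoeth : IsNoetherianRing A := by
    have : Algebra.FiniteType k A := ⟨hfg⟩
    exact Algebra.FiniteType.isNoetherianRing k A
  -- antitone
  have hmono : ∀ {m n : ℕ}, m ≤ n → F n ≤ F m := by
    intro m n h
    induction h with
    | refl => exact le_rfl
    | step h ih => exact le_trans (hanti _) ih
  -- I ≤ F 1
  have hIF1 : I ≤ F 1 := by
    rw [hI, Ideal.span_le]
    rintro x ⟨i, hdi, rfl⟩
    exact hmono hdi (ht i)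
  -- I^m ≤ F m
  have h1 : ∀ m : ℕ, I ^ m ≤ F m := by
    intro m
    induction m with
    | zero => simp [hF0]
    | succ n ih =>
      rw [pow_succ]
      exact le_trans (Ideal.mul_mono ih hIF1) (hmul n 1)
  -- F m ≤ I ^ (m / D)
  have h2 : ∀ m : ℕ, F m ≤ I ^ (m / D) := by
    intro m
    rcases Nat.eq_zero_or_pos m with rfl | hm
    · simp
    rw [hgen m hm, Ideal.span_le]
    rintro x ⟨e, hsum, rfl⟩
    set f : Fin ℓ → ℕ := fun i => if 0 < d i then e i else 0 with hf
    have hti : ∀ i, t i ^ e i ∈ I ^ f i := by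
      intro i
      by_cases hi : 0 < d i
      · simp only [hf, if_pos hi]
        exact Ideal.pow_mem_pow (hI ▸ Ideal.subset_span ⟨i, hi, rfl⟩) _
      · simp [hf, if_neg hi]
    have hprod : (∏ i, t i ^ e i) ∈ I ^ (∑ i, f i) := by
      classical
      have : ∀ s : Finset (Fin ℓ), (∏ i ∈ s, t i ^ e i) ∈ I ^ (∑ i ∈ s, f i) := by
        intro s
        induction s using Finset.induction with
        | empty => simp
        | insert a s hx ih =>
          rw [Finset.prod_insert hx, Finset.sum_insert hx, pow_add]
          exact Ideal.mul_mem_mul (hti _) ih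
      exact this Finset.univ
    have hle : m / D ≤ ∑ i, f i := by
      have : m ≤ (∑ i, f i) * D := by
        rw [← hsum, Finset.sum_mul]
        apply Finset.sum_le_sum
        intro i _
        by_cases hi : 0 < d i
        · simp only [hf, if_pos hi]
          exact Nat.mul_le_mul_left _ (hD i)
        · simp [hf, if_neg hi, Nat.eq_zero_of_not_pos hi]
      calc m / D ≤ ((∑ i, f i) * D) / D := Nat.div_le_div_right this
        _ = ∑ i, f i := Nat.mul_div_cancel _ hDpos
    exact Ideal.pow_le_pow_right hle hprod
  refine ⟨fun m => ⟨h1 m, h2 m⟩, ?_, ?_⟩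
  · apply le_antisymm
    · refine le_iInf fun n => ?_
      refine le_trans (iInf_le _ (n * D)) ?_
      have := h2 (n * D)
      rwa [Nat.mul_div_cancel _ hDpos] at this
    · exact le_iInf fun n => le_trans (iInf_le _ n) (h1 n)
  · have heq : (⨅ m : ℕ, F m) = ⨅ m : ℕ, I ^ m := by
      apply le_antisymm
      · refine le_iInf fun n => ?_
        refine le_trans (iInf_le _ (n * D)) ?_
        have := h2 (n * D)
        rwa [Nat.mul_div_cancel _ hDpos] at this
      · exact le_iInf fun n => le_trans (iInf_le _ n) (h1 n)
    by_cases hIt : I = ⊤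
    · right
      rw [heq]
      simp [hIt, Ideal.top_pow]
    · left
      rw [heq]
      exact Ideal.iInf_pow_eq_bot_of_isDomain I hIt
end

section
/- Let g be a Lie algebra over a field of characteristic zero carrying an involution with (−1)-eigenspace p and (+1)-eigenspace containing h, where (e, h, f) is an sl₂-triple with e, f ∈ p. Define the Slodowy slice S_e = e + p^f where p^f = {Y ∈ p : [f,Y] = 0}. Then: (1) p = [k, e] ⊕ p^f as vector spaces, i.e., S_e is transverse at e to the tangent space [k,e] of the K-orbit through e; here k is the (+1)-eigenspace. (Equivalently: p = [k,e] + p^f and [k,e] ∩ p^f = 0.) -/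
open Polynomial

set_option linter.unusedSectionVars false

namespace Stmt10Aux

variable {K V : Type*} [Field K] [CharZero K] [AddCommGroup V] [Module K V]

lemma pow_mem_inv (A : Module.End K V) {W : Submodule K V} (hW : ∀ x ∈ W, A x ∈ W)
    {x : V} (hx : x ∈ W) (n : ℕ) : (A ^ n) x ∈ W := by
  induction n with
  | zero => simpa using hx
  | succ n ih => rw [pow_succ', Module.End.mul_apply]; exact hW _ ih

lemma aeval_mem_inv (A : Module.End K V) {W : Submodule K V} (hW : ∀ x ∈ W, A x ∈ W)
    (q : K[X]) {x : V} (hx : x ∈ W) : aeval A q x ∈ W := by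
  induction q using Polynomial.induction_on' with
  | add p r hp hr => rw [map_add, LinearMap.add_apply]; exact W.add_mem hp hr
  | monomial n a =>
    have h1 : (algebraMap K (Module.End K V)) a * A ^ n = a • A ^ n := by
      rw [Algebra.algebraMap_eq_smul_one, smul_mul_assoc, one_mul]
    rw [aeval_monomial, h1, LinearMap.smul_apply]
    exact W.smul_mem _ (pow_mem_inv A hW hx n)

lemma aeval_apply_comm (A : Module.End K V) (r s : K[X]) (x : V) :
    aeval A r (aeval A s x) = aeval A (r * s) x := by
  rw [map_mul, Module.End.mul_apply]

lemma pow_mul_of_shift {A H : Module.End K V} {c : K} (hA : H * A = A * (H + c • 1)) (n : ℕ) :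
    H ^ n * A = A * (H + c • 1) ^ n := by
  induction n with
  | zero => simp
  | succ n ih => rw [pow_succ, pow_succ, mul_assoc, hA, ← mul_assoc, ih, mul_assoc]

lemma aeval_mul_of_shift {A H : Module.End K V} {c : K} (hA : H * A = A * (H + c • 1)) (q : K[X]) :
    aeval H q * A = A * aeval H (q.comp (X + C c)) := by
  induction q using Polynomial.induction_on' with
  | add p r hp hr => rw [map_add, add_mul, hp, hr, add_comp, map_add, mul_add]
  | monomial n a =>
    have hXC : aeval H (X + C c) = H + c • 1 := by
      simp [Algebra.algebraMap_eq_smul_one]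
    rw [aeval_monomial, monomial_comp, map_mul, map_pow, aeval_C, hXC]
    rw [mul_assoc, pow_mul_of_shift hA, ← mul_assoc, Algebra.commutes, mul_assoc]

lemma aeval_commute {A B : Module.End K V} (h : A * B = B * A) (q : K[X]) :
    aeval A q * B = B * aeval A q := by
  have hpow : ∀ n : ℕ, A ^ n * B = B * A ^ n := by
    intro n
    induction n with
    | zero => simp
    | succ n ih => rw [pow_succ, mul_assoc, h, ← mul_assoc, ih, mul_assoc]
  induction q using Polynomial.induction_on' with
  | add p r hp hr => rw [map_add, add_mul, mul_add, hp, hr]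
  | monomial n a =>
    rw [aeval_monomial, mul_assoc, hpow, ← mul_assoc, Algebra.commutes, mul_assoc]

lemma coprime_disjoint (A : Module.End K V) {p q : K[X]} (h : IsCoprime p q) {x : V}
    (hp : aeval A p x = 0) (hq : aeval A q x = 0) : x = 0 := by
  obtain ⟨a, b, hab⟩ := h
  calc x = aeval A (1 : K[X]) x := by rw [aeval_one, Module.End.one_apply]
    _ = aeval A a (aeval A p x) + aeval A b (aeval A q x) := by
        rw [aeval_apply_comm, aeval_apply_comm, ← LinearMap.add_apply, ← map_add, hab]
    _ = 0 := by rw [hp, hq, map_zero, map_zero, add_zero]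

lemma coprime_split (A : Module.End K V) {p q : K[X]} (h : IsCoprime p q) {x : V}
    (hx : aeval A (p * q) x = 0) :
    ∃ y z : V, aeval A p y = 0 ∧ aeval A q z = 0 ∧ x = y + z ∧
      (∃ r : K[X], y = aeval A r x) ∧ (∃ r : K[X], z = aeval A r x) := by
  obtain ⟨a, b, hab⟩ := h
  refine ⟨aeval A (b * q) x, aeval A (a * p) x, ?_, ?_, ?_, ⟨b * q, rfl⟩, ⟨a * p, rfl⟩⟩
  · rw [aeval_apply_comm, show p * (b * q) = b * (p * q) by ring, ← aeval_apply_comm A _ _, hx, map_zero]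
  · rw [aeval_apply_comm, show q * (a * p) = a * (p * q) by ring, ← aeval_apply_comm A _ _, hx, map_zero]
  · calc x = aeval A (1 : K[X]) x := by rw [aeval_one, Module.End.one_apply]
      _ = aeval A (b * q) x + aeval A (a * p) x := by
          rw [← LinearMap.add_apply, ← map_add, show b * q + a * p = a * p + b * q by ring, hab]

lemma gap (A : Module.End K V) {v : V} (hv : v ≠ 0) :
    ∀ s : ℕ, (A ^ s) v = 0 → ∃ k, (A ^ k) v ≠ 0 ∧ (A ^ (k + 1)) v = 0 := by
  intro s
  induction s with
  | zero => intro hs; simp at hs; exact absurd hs hv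
  | succ s ih =>
    intro hs
    by_cases h : (A ^ s) v = 0
    · exact ih h
    · exact ⟨s, h, hs⟩

lemma extract_pow_aux {p : K[X]} (hp : Irreducible p) :
    ∀ n : ℕ, ∀ q : K[X], q ≠ 0 → q.natDegree ≤ n → ∃ s g, q = p ^ s * g ∧ ¬ p ∣ g := by
  intro n
  induction n with
  | zero =>
    intro q hq hdeg
    refine ⟨0, q, by ring, fun hdvd => ?_⟩
    have hq0 : q.natDegree = 0 := le_antisymm hdeg (Nat.zero_le _)
    have hu : IsUnit q := by
      rw [eq_C_of_natDegree_eq_zero hq0] at hq ⊢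
      exact isUnit_C.mpr (IsUnit.mk0 _ (fun hc => hq (by rw [hc, map_zero])))
    exact hp.not_isUnit (isUnit_of_dvd_unit hdvd hu)
  | succ n ih =>
    intro q hq hdeg
    by_cases hdvd : p ∣ q
    · obtain ⟨q', rfl⟩ := hdvd
      have hq' : q' ≠ 0 := fun h => hq (by rw [h, mul_zero])
      have hdeg' : q'.natDegree ≤ n := by
        have h1 := natDegree_mul hp.ne_zero hq'
        have h2 := hp.natDegree_pos
        omega
      obtain ⟨s, g, hfac, hnd⟩ := ih q' hq' hdeg'
      exact ⟨s + 1, g, by rw [hfac]; ring, hnd⟩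
    · exact ⟨0, q, by ring, hdvd⟩

lemma extract_pow {p : K[X]} (hp : Irreducible p) (q : K[X]) (hq : q ≠ 0) :
    ∃ s g, q = p ^ s * g ∧ ¬ p ∣ g :=
  extract_pow_aux hp q.natDegree q hq le_rfl
section Rel
variable {E F H : Module.End K V}

lemma shiftE (hHE : H * E - E * H = (2:K) • E) : H * E = E * (H + (2:K) • 1) := by
  have h1 : H * E = E * H + (2:K) • E := by rw [← hHE]; abel
  rw [h1, mul_add, mul_smul_comm, mul_one]

lemma F_mul_E_pow (hHE : H * E - E * H = (2:K) • E) (hEF : E * F - F * E = H) (j : ℕ) :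
    F * E ^ (j+1) = E ^ (j+1) * F - ((j:K)+1) • (E ^ j * (H + (j:K) • 1)) := by
  have hFE' : F * E = E * F - H := by rw [← hEF]; noncomm_ring
  induction j with
  | zero =>
    simpa using hFE'
  | succ j ih =>
    have shiftj : (H + (j:K) • 1) * E = E * (H + ((j:K)+2) • 1) := by
      rw [add_mul, shiftE hHE, smul_mul_assoc, one_mul]
      rw [mul_add, mul_add, mul_smul_comm, mul_one, mul_smul_comm, mul_one]
      rw [add_assoc, ← add_smul]
      congr 1
      ring
    have key : F * E ^ (j+2) = E ^ (j+1) * (E * F - H)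
        - ((j:K)+1) • (E ^ (j+1) * (H + ((j:K)+2) • 1)) := by
      calc F * E ^ (j+2)
          = (F * E ^ (j+1)) * E := by rw [mul_assoc, ← pow_succ]
        _ = (E ^ (j+1) * F) * E - ((j:K)+1) • ((E ^ j * (H + (j:K) • 1)) * E) := by
            rw [ih, sub_mul, smul_mul_assoc]
        _ = E ^ (j+1) * (F * E) - ((j:K)+1) • (E ^ j * (E * (H + ((j:K)+2) • 1))) := by
            rw [mul_assoc, mul_assoc, shiftj]
        _ = E ^ (j+1) * (E * F - H) - ((j:K)+1) • (E ^ (j+1) * (H + ((j:K)+2) • 1)) := by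
            rw [hFE', ← mul_assoc, ← pow_succ]
    rw [key]
    push_cast
    simp only [mul_sub, mul_add, sub_mul, add_mul, mul_smul_comm, smul_mul_assoc, mul_one,
      smul_add, smul_sub, smul_smul, pow_succ, mul_assoc]
    module

lemma symm_hHE (hHF : H * F - F * H = -((2:K) • F)) : (-H) * F - F * (-H) = (2:K) • F := by
  have h1 : (-H) * F - F * (-H) = -(H * F - F * H) := by noncomm_ring
  rw [h1, hHF, neg_neg]

lemma symm_hEF (hEF : E * F - F * E = H) : F * E - E * F = -H := by
  rw [← hEF]; noncomm_ring

lemma E_mul_F_pow (hHF : H * F - F * H = -((2:K) • F)) (hEF : E * F - F * E = H) (j : ℕ) :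
    E * F ^ (j+1) = F ^ (j+1) * E - ((j:K)+1) • (F ^ j * (-H + (j:K) • 1)) :=
  F_mul_E_pow (symm_hHE hHF) (symm_hEF hEF) j

lemma FE_comm_H (hHE : H * E - E * H = (2:K) • E) (hHF : H * F - F * H = -((2:K) • F)) :
    (F * E) * H = H * (F * E) := by
  have h1 : E * H = H * E - (2:K) • E := by rw [← hHE]; abel
  have h2 : F * H = H * F + (2:K) • F := by rw [eq_add_of_sub_eq hHF]; abel
  calc (F * E) * H = F * (E * H) := by rw [mul_assoc]
    _ = F * (H * E) - (2:K) • (F * E) := by rw [h1, mul_sub, mul_smul_comm]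
    _ = (F * H) * E - (2:K) • (F * E) := by rw [mul_assoc]
    _ = H * (F * E) := by rw [h2, add_mul, smul_mul_assoc, mul_assoc]; abel

lemma eigen_kill [Module.Finite K V]
    (hHE : H * E - E * H = (2:K) • E) (hHF : H * F - F * H = -((2:K) • F))
    (hEF : E * F - F * E = H) {u : V} {μ : K}
    (hu : H u = μ • u) (hFE : F (E u) = 0) (hμ : ∀ n : ℕ, μ ≠ (n : K)) : u = 0 := by
  by_contra hne
  have hHFpt : ∀ x : V, H (F x) = F (H x) - (2:K) • F x := by
    intro x
    have h1 := congrArg (fun T : Module.End K V => T x) hHF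
    simp only [LinearMap.sub_apply, Module.End.mul_apply, LinearMap.smul_apply,
      LinearMap.neg_apply] at h1
    have h2 : H (F x) - F (H x) = -((2:K) • F x) := h1
    rw [eq_add_of_sub_eq h2]; abel
  have heig : ∀ j : ℕ, H ((F ^ j) u) = (μ - 2 * (j:K)) • (F ^ j) u := by
    intro j
    induction j with
    | zero => simpa using hu
    | succ j ih =>
      have e1 : H ((F ^ (j+1)) u) = F (H ((F ^ j) u)) - (2:K) • F ((F ^ j) u) := by
        rw [pow_succ', Module.End.mul_apply, hHFpt]
      have e2 : F ((F ^ j) u) = (F ^ (j+1)) u := by rw [pow_succ', Module.End.mul_apply]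
      rw [e1, ih, map_smul, e2, ← sub_smul]
      congr 1
      push_cast
      ring
  have hex : ∃ j : ℕ, (F ^ j) u = 0 := by
    by_contra hcon
    push_neg at hcon
    have hs : (Set.range fun n : ℕ => μ - 2 * (n:K)).Infinite := by
      apply Set.infinite_range_of_injective
      intro n m hnm
      simp only at hnm
      have h4 : (2:K) * (n:K) = 2 * (m:K) := by
        have := sub_right_inj.mp hnm
        exact this
      have h5 : ((n:K)) = (m:K) := mul_left_cancel₀ two_ne_zero h4
      exact_mod_cast h5
    exact hs ((H.eigenvectors_linearIndependent (Set.range fun n : ℕ => μ - 2 * (n:K))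
      (fun s => (F ^ (Classical.choose s.2)) u)
      (fun s => Module.End.hasEigenvector_iff.mpr
        ⟨Module.End.mem_eigenspace_iff.mpr (by
          have hspec : μ - 2 * ((Classical.choose s.2 : ℕ) : K) = (s : K) :=
            Classical.choose_spec s.2
          show H ((F ^ Classical.choose s.2) u) = (s:K) • (F ^ Classical.choose s.2) u
          rw [heig, hspec]), hcon _⟩)).finite)
  obtain ⟨s0, hs0⟩ := hex
  obtain ⟨r, hr1, hr2⟩ := gap F hne s0 hs0
  have hid := E_mul_F_pow hHF hEF r
  have happ := congrArg (fun T : Module.End K V => T u) hid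
  simp only [Module.End.mul_apply, LinearMap.sub_apply, LinearMap.smul_apply] at happ
  have hL : E ((F ^ (r+1)) u) = 0 := by rw [hr2, map_zero]
  have hF1 : (F ^ (r+1)) (E u) = 0 := by
    rw [pow_succ, Module.End.mul_apply, hFE, map_zero]
  have hHu : ((-H + (r:K) • 1) : Module.End K V) u = ((r:K) - μ) • u := by
    simp only [LinearMap.add_apply, LinearMap.neg_apply, LinearMap.smul_apply,
      Module.End.one_apply, hu]
    rw [sub_smul]; abel
  rw [hL, hF1, hHu, map_smul] at happ
  have happ2 := happ
  rw [zero_sub, eq_comm, neg_eq_zero] at happ2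
  rw [smul_smul, smul_eq_zero] at happ2
  rcases happ2 with hc | hc
  · rcases mul_eq_zero.mp hc with hc1 | hc1
    · exact (Nat.cast_add_one_ne_zero r : ((r:K)+1) ≠ 0) (by exact_mod_cast hc1)
    · rw [sub_eq_zero] at hc1
      exact hμ r hc1.symm
  · exact hr1 hc

lemma gen_eigen_kill [Module.Finite K V]
    (hHE : H * E - E * H = (2:K) • E) (hHF : H * F - F * H = -((2:K) • F))
    (hEF : E * F - F * E = H) {μ : K} (hμ : ∀ n : ℕ, μ ≠ (n:K)) :
    ∀ (n : ℕ) (u : V), ((H - μ • 1) ^ n) u = 0 → F (E u) = 0 → u = 0 := by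
  intro n
  induction n with
  | zero => intro u h1 _; simpa using h1
  | succ n ih =>
    intro u h1 h2
    have hcomm : (F * E) * (H - μ • 1) = (H - μ • 1) * (F * E) := by
      rw [mul_sub, sub_mul, FE_comm_H hHE hHF, mul_smul_comm, smul_mul_assoc, mul_one, one_mul]
    have h1' : ((H - μ • 1) ^ n) ((H - μ • 1) u) = 0 := by
      rw [← Module.End.mul_apply, ← pow_succ]; exact h1
    have h2' : F (E ((H - μ • 1) u)) = 0 := by
      have h3 := congrArg (fun T : Module.End K V => T u) hcomm
      simp only [Module.End.mul_apply] at h3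
      rw [h3, h2, map_zero]
    have h4 := ih _ h1' h2'
    have hu : H u = μ • u := by
      have h5 : H u - μ • u = 0 := by
        simpa [LinearMap.sub_apply, LinearMap.smul_apply, Module.End.one_apply] using h4
      rw [← sub_eq_zero]; exact h5
    exact eigen_kill hHE hHF hEF hu h2 hμ

lemma chain (hHE : H * E - E * H = (2:K) • E) (hHF : H * F - F * H = -((2:K) • F))
    (hEF : E * F - F * E = H) :
    ∀ (k : ℕ) (w : V), F w = 0 → (E ^ k) w = 0 →
      aeval H (∏ i ∈ Finset.range k, (X + C (i:K))) w = 0 := by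
  intro k
  induction k with
  | zero => intro w _ hE; simpa using hE
  | succ k ih =>
    intro w hF hE
    have hXC : aeval H (X + C (k:K)) w = H w + (k:K) • w := by
      simp [Algebra.algebraMap_eq_smul_one, Nat.cast_smul_eq_nsmul]
    have hFw' : F (H w + (k:K) • w) = 0 := by
      have hFH := congrArg (fun T : Module.End K V => T w) hHF
      simp only [LinearMap.sub_apply, Module.End.mul_apply, LinearMap.smul_apply,
        LinearMap.neg_apply] at hFH
      -- hFH : H (F w) - F (H w) = -(2 • F w)
      rw [hF, map_zero, zero_sub, neg_inj] at hFH
      -- hFH : F (H w) = 2 • F w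
      rw [map_add, map_smul, hFH, hF, smul_zero, smul_zero, add_zero]
    have hEw' : (E ^ k) (H w + (k:K) • w) = 0 := by
      have hid := F_mul_E_pow hHE hEF k
      have happ := congrArg (fun T : Module.End K V => T w) hid
      simp only [Module.End.mul_apply, LinearMap.sub_apply, LinearMap.smul_apply] at happ
      rw [hE, map_zero, hF, map_zero, zero_sub, eq_comm, neg_eq_zero] at happ
      -- happ : (k+1) • (E^k ((H + k•1) w)) = 0
      have h2 : ((H + (k:K) • 1) : Module.End K V) w = H w + (k:K) • w := by
        simp [LinearMap.add_apply, LinearMap.smul_apply, Module.End.one_apply]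
      rw [h2] at happ
      rcases smul_eq_zero.mp happ with hc | hc
      · exact absurd hc (Nat.cast_add_one_ne_zero k)
      · exact hc
    have hres := ih _ hFw' hEw'
    rw [Finset.prod_range_succ, map_mul, Module.End.mul_apply, hXC]
    exact hres

end Rel

section Poly

lemma shift_poly_ne {p : K[X]} (hp : Irreducible p) {c : K} (hc : c ≠ 0) :
    p.comp (X - C c) ≠ p := by
  intro heq
  have hev : ∀ x : K, p.eval (x - c) = p.eval x := by
    intro x
    have h1 := congrArg (eval x) heq
    rwa [eval_comp, eval_sub, eval_X, eval_C] at h1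
  have hiter : ∀ n : ℕ, p.eval (-((n:K) * c)) = p.eval 0 := by
    intro n
    induction n with
    | zero => simp
    | succ n ihn =>
      have h1 : -(((n:K)+1) * c) = -((n:K) * c) - c := by ring
      have h2 := hev (-((n:K) * c))
      push_cast
      rw [h1, h2, ihn]
  have hinj : Function.Injective fun n : ℕ => -((n:K) * c) := by
    intro n m hnm
    simp only [neg_inj] at hnm
    have := mul_right_cancel₀ hc hnm
    exact_mod_cast this
  have hinf : {x : K | (p - C (p.eval 0)).IsRoot x}.Infinite := by
    apply Set.Infinite.mono (s := Set.range fun n : ℕ => -((n:K) * c))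
    · rintro x ⟨n, rfl⟩
      simp [IsRoot, hiter n]
    · exact Set.infinite_range_of_injective hinj
  have hr0 : p - C (p.eval 0) = 0 := eq_zero_of_infinite_isRoot _ hinf
  rw [sub_eq_zero] at hr0
  rcases eq_or_ne (p.eval 0) 0 with h0 | h0
  · exact hp.ne_zero (by rw [hr0, h0, map_zero])
  · exact hp.not_isUnit (hr0 ▸ isUnit_C.mpr (IsUnit.mk0 _ h0))

lemma monic_dvd_eq {p q : K[X]} (hp : p.Monic) (hq : q.Monic) (hdvd : p ∣ q)
    (hdeg : q.natDegree ≤ p.natDegree) : p = q := by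
  obtain ⟨u, rfl⟩ := hdvd
  have hu0 : u ≠ 0 := by
    intro h
    rw [h, mul_zero] at hq
    exact hq.ne_zero rfl
  have h1 : (p * u).natDegree = p.natDegree + u.natDegree := natDegree_mul hp.ne_zero hu0
  have hu : u.natDegree = 0 := by omega
  have huC : u = C (u.coeff 0) := eq_C_of_natDegree_eq_zero hu
  have hco : u.coeff 0 = 1 := by
    have h2 := hq.leadingCoeff
    rw [huC, leadingCoeff_mul, hp.leadingCoeff, one_mul, leadingCoeff_C] at h2
    exact h2
  rw [huC, hco, map_one, mul_one]

lemma shift_coprime {p : K[X]} (hp : Irreducible p) (hm : p.Monic) {a b : K} (hab : a ≠ b) :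
    IsCoprime (p.comp (X - C a)) (p.comp (X - C b)) := by
  have base : IsCoprime p (p.comp (X - C (b - a))) := by
    rw [hp.coprime_iff_not_dvd]
    intro hdvd
    have hmq : (p.comp (X - C (b - a))).Monic := hm.comp (monic_X_sub_C _) (by rw [natDegree_X_sub_C]; exact one_ne_zero)
    have hdeg : (p.comp (X - C (b - a))).natDegree ≤ p.natDegree := by
      rw [natDegree_comp, natDegree_X_sub_C, mul_one]
    exact shift_poly_ne hp (sub_ne_zero.mpr (Ne.symm hab)) (monic_dvd_eq hm hmq hdvd hdeg).symm
  have hmap := base.map ((aeval (X - C a) : K[X] →ₐ[K] K[X]) : K[X] →+* K[X])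
  have e1 : (aeval (X - C a)) p = p.comp (X - C a) := by rw [comp_eq_aeval]
  have e2 : (aeval (X - C a)) (p.comp (X - C (b - a))) = p.comp (X - C b) := by
    rw [comp_eq_aeval, comp_eq_aeval, ← comp_eq_aeval, ← comp_eq_aeval, comp_assoc]
    congr 1
    rw [sub_comp, X_comp, C_comp, map_sub]
    ring
  rw [RingHom.coe_coe] at hmap
  rwa [e1, e2] at hmap

end Poly

section Main
variable {E F H : Module.End K V}

lemma loc_nilpotent [Module.Finite K V] (hHE : H * E - E * H = (2:K) • E)
    {p : K[X]} (hp : Irreducible p) (hm : p.Monic) {w : V} (hw : aeval H p w = 0) :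
    ∃ k, (E ^ k) w = 0 := by
  have hsh : H * E = E * (H + (2:K) • 1) := shiftE hHE
  set P : ℕ → K[X] := fun j => p.comp (X - C (2*(j:K))) with hP
  have key : ∀ j : ℕ, aeval H (P j) ((E ^ j) w) = 0 := by
    intro j
    induction j with
    | zero => simpa [hP] using hw
    | succ j ihj =>
      have hcompeq : (P (j+1)).comp (X + C 2) = P j := by
        rw [hP]
        simp only []
        rw [comp_assoc]
        congr 1
        rw [sub_comp, X_comp, C_comp]
        push_cast
        rw [show (2*((j:K)+1)) = 2 + 2*(j:K) by ring, map_add]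
        ring
      have hsh2 := aeval_mul_of_shift hsh (P (j+1))
      have happ := congrArg (fun T : Module.End K V => T ((E ^ j) w)) hsh2
      simp only [Module.End.mul_apply] at happ
      have e1 : (E ^ (j+1)) w = E ((E ^ j) w) := by rw [pow_succ', Module.End.mul_apply]
      rw [e1, happ, hcompeq, ihj, map_zero]
  by_contra hc
  push_neg at hc
  have hPm : ∀ j : ℕ, (P j).Monic :=
    fun j => hm.comp (monic_X_sub_C _) (by rw [natDegree_X_sub_C]; exact one_ne_zero)
  have hPcop : ∀ i j : ℕ, i ≠ j → IsCoprime (P i) (P j) := by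
    intro i j hij
    exact shift_coprime hp hm (by
      intro h
      exact hij (by exact_mod_cast mul_left_cancel₀ (two_ne_zero (α := K)) h))
  set d := Module.finrank K V with hd
  have hli : LinearIndependent K (fun j : Fin (d+1) => (E ^ (j:ℕ)) w) := by
    rw [linearIndependent_iff']
    intro s g hsum i hi
    set B := ∏ t ∈ s.erase i, P (t:ℕ) with hB
    have hBkill : ∀ t ∈ s.erase i, aeval H B ((E ^ (t:ℕ)) w) = 0 := by
      intro t ht
      obtain ⟨m, hm'⟩ := Finset.dvd_prod_of_mem (fun t : Fin (d+1) => P (t:ℕ)) ht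
      rw [hB, hm', show P (t:ℕ) * m = m * P (t:ℕ) by ring, ← aeval_apply_comm, key, map_zero]
    have hsum2 : aeval H B (∑ t ∈ s, g t • (E ^ (t:ℕ)) w) = 0 := by rw [hsum, map_zero]
    rw [map_sum] at hsum2
    simp only [map_smul] at hsum2
    rw [← Finset.add_sum_erase _ _ hi] at hsum2
    rw [Finset.sum_congr rfl (fun t ht => by rw [hBkill t ht, smul_zero])] at hsum2
    simp only [Finset.sum_const_zero, add_zero] at hsum2
    have hBne : aeval H B ((E ^ (i:ℕ)) w) ≠ 0 := by
      intro h0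
      have hcopB : IsCoprime (P (i:ℕ)) B :=
        IsCoprime.prod_right (fun t ht =>
          hPcop _ _ (fun hv => (Finset.ne_of_mem_erase ht) (Fin.val_injective hv.symm)))
      exact hc (i:ℕ) (coprime_disjoint H hcopB (key _) h0)
    exact (smul_eq_zero.mp hsum2).resolve_right hBne
  have hcard := hli.fintype_card_le_finrank
  rw [Fintype.card_fin] at hcard
  omega

lemma primary_linear [Module.Finite K V] (hHE : H * E - E * H = (2:K) • E)
    (hHF : H * F - F * H = -((2:K) • F)) (hEF : E * F - F * E = H)
    {p : K[X]} (hp : Irreducible p) (hm : p.Monic) {w : V}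
    (hw0 : w ≠ 0) (hwF : F w = 0) (hwp : aeval H p w = 0) :
    ∃ m : ℕ, p = X + C (m:K) := by
  obtain ⟨k, hk⟩ := loc_nilpotent hHE hp hm hwp
  have hchain := chain hHE hHF hEF k w hwF hk
  by_cases hdvd : p ∣ ∏ i ∈ Finset.range k, (X + C (i:K))
  · have hprime : Prime p := (UniqueFactorizationMonoid.irreducible_iff_prime).mp hp
    obtain ⟨i, _, hdvd'⟩ := hprime.exists_mem_finset_dvd hdvd
    refine ⟨i, ?_⟩
    have hlin : (X + C (i:K)).Monic := monic_X_add_C _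
    have hdeg : (X + C (i:K)).natDegree ≤ p.natDegree := by
      rw [natDegree_X_add_C]
      exact hp.natDegree_pos
    exact monic_dvd_eq hm hlin hdvd' hdeg
  · exact absurd (coprime_disjoint H (hp.coprime_iff_not_dvd.mpr hdvd) hwp hchain) hw0

lemma kill_v [Module.Finite K V] (hHE : H * E - E * H = (2:K) • E)
    (hHF : H * F - F * H = -((2:K) • F)) (hEF : E * F - F * E = H)
    {m s : ℕ} {v : V} (hvF : F v = 0) (hvE : v ∈ LinearMap.range E)
    (hvp : aeval H ((X + C (m:K)) ^ s) v = 0) : v = 0 := by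
  obtain ⟨u, rfl⟩ := hvE
  set a : K := -((m:K) + 2) with ha
  have hsh : H * E = E * (H + (2:K) • 1) := shiftE hHE
  have hirr : Irreducible (X - C a) := irreducible_X_sub_C a
  obtain ⟨t, g, hfac, hgnd⟩ := extract_pow hirr _ (LinearMap.charpoly_monic H).ne_zero
  have hcop : IsCoprime ((X - C a) ^ t) g := (hirr.coprime_iff_not_dvd.mpr hgnd).pow_left
  have hann : aeval H ((X - C a) ^ t * g) u = 0 := by
    rw [← hfac, LinearMap.aeval_self_charpoly]
    rfl
  obtain ⟨y, z, hy, hz, huyz, ⟨r1, hr1⟩, ⟨r2, hr2⟩⟩ := coprime_split H hcop hann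
  have hFEcomm : ∀ q : K[X], aeval H q * (F * E) = (F * E) * aeval H q :=
    fun q => aeval_commute (FE_comm_H hHE hHF).symm q
  have hFEpt : ∀ (q : K[X]) (x : V), aeval H q (F (E x)) = F (E (aeval H q x)) := by
    intro q x
    have h1 := congrArg (fun T : Module.End K V => T x) (hFEcomm q)
    simpa only [Module.End.mul_apply] using h1
  have hFEu : F (E u) = 0 := hvF
  have hFEy : F (E y) = 0 := by
    have k1 : aeval H ((X - C a) ^ t) (F (E y)) = 0 := by
      rw [hFEpt, hy, map_zero, map_zero]
    have k2 : aeval H g (F (E y)) = 0 := by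
      have hsplit : F (E y) = - F (E z) := by
        have : F (E y) + F (E z) = 0 := by
          rw [← map_add F, ← map_add E, ← huyz]
          exact hFEu
        exact eq_neg_of_add_eq_zero_left this
      rw [hsplit, map_neg, hFEpt, hz, map_zero, map_zero, neg_zero]
    exact coprime_disjoint H hcop k1 k2
  have hμ : ∀ n : ℕ, a ≠ (n : K) := by
    intro n hn
    have : ((n + m + 2 : ℕ) : K) = 0 := by
      push_cast
      rw [ha] at hn
      linear_combination (-1 : K) * hn
    exact (Nat.cast_ne_zero.mpr (by omega)) this
  have hy0 : y = 0 := by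
    have hyann : ((H - a • 1) ^ t) y = 0 := by
      have e1 : aeval H (X - C a) = H - a • 1 := by
        simp [Algebra.algebraMap_eq_smul_one]
      rw [← e1, ← map_pow]
      exact hy
    exact gen_eigen_kill hHE hHF hEF hμ t y hyann hFEy
  have huz : u = z := by rw [huyz, hy0, zero_add]
  set G : K[X] := g.comp (X - C 2) with hG
  have hGz : aeval H G (E z) = 0 := by
    have hcompeq : G.comp (X + C 2) = g := by
      rw [hG, comp_assoc]
      have h3 : (X - C (2:K)).comp (X + C (2:K)) = (X : K[X]) := by
        rw [sub_comp, X_comp, C_comp]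
        ring
      rw [h3, comp_X]
    have hsh2 := aeval_mul_of_shift hsh G
    have happ := congrArg (fun T : Module.End K V => T z) hsh2
    simp only [Module.End.mul_apply] at happ
    rw [happ, hcompeq, hz, map_zero]
  have hnd2 : ¬ (X + C (m:K)) ∣ G := by
    intro hdvd
    have hroot : G.IsRoot (-(m:K)) := by
      have : (X - C (-(m:K))) ∣ G := by rwa [map_neg, sub_neg_eq_add]
      exact dvd_iff_isRoot.mp this
    have : g.IsRoot a := by
      have h2 : G.eval (-(m:K)) = g.eval (-(m:K) - 2) := by
        rw [hG, eval_comp, eval_sub, eval_X, eval_C]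
      rw [IsRoot, ha, show -((m:K)+2) = -(m:K) - 2 by ring, ← h2]
      exact hroot
    exact hgnd (dvd_iff_isRoot.mpr this)
  have hirr2 : Irreducible (X + C (m:K)) := by
    have := irreducible_X_sub_C (-(m:K))
    rwa [map_neg, sub_neg_eq_add] at this
  have hcop2 : IsCoprime ((X + C (m:K)) ^ s) G := (hirr2.coprime_iff_not_dvd.mpr hnd2).pow_left
  rw [huz]
  exact coprime_disjoint H hcop2 (by rw [← huz]; exact hvp) hGz

theorem main_inf [Module.Finite K V] (hHE : H * E - E * H = (2:K) • E)
    (hHF : H * F - F * H = -((2:K) • F)) (hEF : E * F - F * E = H) :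
    LinearMap.ker F ⊓ LinearMap.range E = ⊥ := by
  set D : Submodule K V := LinearMap.ker F ⊓ LinearMap.range E with hD
  have hDinv : ∀ x ∈ D, H x ∈ D := by
    intro x hx
    obtain ⟨hx1, hx2⟩ := Submodule.mem_inf.mp hx
    rw [LinearMap.mem_ker] at hx1
    apply Submodule.mem_inf.mpr
    constructor
    · rw [LinearMap.mem_ker]
      have hFH := congrArg (fun T : Module.End K V => T x) hHF
      simp only [LinearMap.sub_apply, Module.End.mul_apply, LinearMap.smul_apply,
        LinearMap.neg_apply] at hFH
      rw [hx1, map_zero, zero_sub, neg_inj] at hFH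
      rw [hFH, smul_zero]
    · obtain ⟨x', rfl⟩ := hx2
      have hsh := congrArg (fun T : Module.End K V => T x') (shiftE hHE)
      simp only [Module.End.mul_apply] at hsh
      rw [hsh]
      exact LinearMap.mem_range_self _ _
  have key : ∀ n : ℕ, ∀ q : K[X], q ≠ 0 → q.natDegree ≤ n →
      ∀ v ∈ D, aeval H q v = 0 → v = 0 := by
    intro n
    induction n using Nat.strong_induction_on with
    | _ n ih =>
    intro q hq hdeg v hvD hqv
    by_cases hun : IsUnit q
    · obtain ⟨cc, hcu, hcq⟩ := Polynomial.isUnit_iff.mp hun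
      rw [← hcq, aeval_C, Algebra.algebraMap_eq_smul_one, LinearMap.smul_apply,
        Module.End.one_apply] at hqv
      exact (smul_eq_zero.mp hqv).resolve_left hcu.ne_zero
    · obtain ⟨p0, hp0, hp0d⟩ := WfDvdMonoid.exists_irreducible_factor hun hq
      have hp00 : p0 ≠ 0 := hp0.ne_zero
      set p : K[X] := p0 * C p0.leadingCoeff⁻¹ with hpdef
      have hpassoc : Associated p0 p :=
        associated_mul_unit_right p0 _
          (isUnit_C.mpr (IsUnit.mk0 _ (inv_ne_zero (leadingCoeff_ne_zero.mpr hp00))))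
      have hpirr : Irreducible p := hpassoc.irreducible hp0
      have hpmonic : p.Monic := monic_mul_leadingCoeff_inv hp00
      have hpdvd : p ∣ q := dvd_trans hpassoc.symm.dvd hp0d
      obtain ⟨s, g, hfac, hgnd⟩ := extract_pow hpirr q hq
      have hs0 : s ≠ 0 := by
        intro h
        rw [h, pow_zero, one_mul] at hfac
        exact hgnd (hfac ▸ hpdvd)
      have hg0 : g ≠ 0 := fun h => hq (by rw [hfac, h, mul_zero])
      have hcop : IsCoprime (p ^ s) g := (hpirr.coprime_iff_not_dvd.mpr hgnd).pow_left
      obtain ⟨y, z, hy, hz, hvyz, ⟨r1, hr1⟩, ⟨r2, hr2⟩⟩ :=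
        coprime_split H hcop (by rw [← hfac]; exact hqv)
      have hyD : y ∈ D := by rw [hr1]; exact aeval_mem_inv H hDinv r1 hvD
      have hzD : z ∈ D := by rw [hr2]; exact aeval_mem_inv H hDinv r2 hvD
      have hdegg : g.natDegree < n := by
        have h1 : q.natDegree = s * p.natDegree + g.natDegree := by
          rw [hfac, natDegree_mul (pow_ne_zero _ hpirr.ne_zero) hg0, natDegree_pow]
        have h2 := hpirr.natDegree_pos
        have h3 : 1 ≤ s := Nat.one_le_iff_ne_zero.mpr hs0
        have h4 : 1 * 1 ≤ s * p.natDegree := Nat.mul_le_mul h3 h2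
        omega
      have hz0 : z = 0 := ih g.natDegree hdegg g hg0 le_rfl z hzD hz
      have hy0 : y = 0 := by
        by_cases hyy : y = 0
        · exact hyy
        · have hyann : ((aeval H p) ^ s) y = 0 := by rw [← map_pow]; exact hy
          obtain ⟨k, hk1, hk2⟩ := gap (aeval H p) hyy s hyann
          have hwD : ((aeval H p) ^ k) y ∈ D := by
            rw [← map_pow]
            exact aeval_mem_inv H hDinv _ hyD
          have hwF : F (((aeval H p) ^ k) y) = 0 :=
            LinearMap.mem_ker.mp (Submodule.mem_inf.mp hwD).1
          have hwp : aeval H p (((aeval H p) ^ k) y) = 0 := by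
            rw [← Module.End.mul_apply, ← pow_succ']
            exact hk2
          obtain ⟨mm, hpm⟩ := primary_linear hHE hHF hEF hpirr hpmonic hk1 hwF hwp
          have hyF : F y = 0 := LinearMap.mem_ker.mp (Submodule.mem_inf.mp hyD).1
          have hyE : y ∈ LinearMap.range E := (Submodule.mem_inf.mp hyD).2
          have hyp : aeval H ((X + C (mm:K)) ^ s) y = 0 := by rw [← hpm]; exact hy
          exact kill_v hHE hHF hEF hyF hyE hyp
      rw [hvyz, hy0, hz0, add_zero]
  rw [eq_bot_iff]
  intro v hv
  rw [Submodule.mem_bot]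
  refine key (LinearMap.charpoly H).natDegree _ (LinearMap.charpoly_monic H).ne_zero le_rfl v hv ?_
  rw [LinearMap.aeval_self_charpoly]
  rfl

theorem main_sup [Module.Finite K V] (hHE : H * E - E * H = (2:K) • E)
    (hHF : H * F - F * H = -((2:K) • F)) (hEF : E * F - F * E = H) :
    LinearMap.range E ⊔ LinearMap.ker F = ⊤ := by
  have dm_sub : ∀ A B : Module.End K V, (A - B).dualMap = A.dualMap - B.dualMap := by
    intro A B; ext φ x
    simp [LinearMap.dualMap_apply]
  have dm_smul : ∀ (c : K) (A : Module.End K V), (c • A).dualMap = c • A.dualMap := by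
    intro c A; ext φ x
    simp [LinearMap.dualMap_apply]
  have dm_neg : ∀ A : Module.End K V, (-A).dualMap = -A.dualMap := by
    intro A; ext φ x
    simp [LinearMap.dualMap_apply]
  have dm_mul : ∀ A B : Module.End K V, (A * B).dualMap = B.dualMap * A.dualMap := by
    intro A B; ext φ x
    simp [LinearMap.dualMap_apply, Module.End.mul_apply]
  have h1 : H.dualMap * F.dualMap - F.dualMap * H.dualMap = (2:K) • F.dualMap := by
    rw [← dm_mul, ← dm_mul, ← dm_sub, ← dm_smul]
    congr 1
    rw [show F * H - H * F = -(H * F - F * H) by noncomm_ring, hHF, neg_neg]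
  have h2 : H.dualMap * E.dualMap - E.dualMap * H.dualMap = -((2:K) • E.dualMap) := by
    rw [← dm_mul, ← dm_mul, ← dm_sub, ← dm_smul, ← dm_neg]
    congr 1
    rw [show E * H - H * E = -(H * E - E * H) by noncomm_ring, hHE]
  have h3 : F.dualMap * E.dualMap - E.dualMap * F.dualMap = H.dualMap := by
    rw [← dm_mul, ← dm_mul, ← dm_sub, hEF]
  have hdual := main_inf h1 h2 h3
  have hann : (LinearMap.range E ⊔ LinearMap.ker F).dualAnnihilator = ⊥ := by
    rw [Submodule.dualAnnihilator_sup_eq, ← LinearMap.ker_dualMap_eq_dualAnnihilator_range,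
      ← LinearMap.range_dualMap_eq_dualAnnihilator_ker]
    exact hdual
  exact Subspace.dualAnnihilator_inj.mp (by rw [hann, Submodule.dualAnnihilator_top])

end Main
end Stmt10Aux

/-- Let `L` be a finite-dimensional Lie algebra over a field of characteristic
zero with an involution `θ`, with `(+1)`-eigenspace `k` and `(−1)`-eigenspace `p`.  Let
`(e, h, f)` be an `sl₂`-triple with `h ∈ k` and `e, f ∈ p`.  Then `p = [k, e] ⊕ p^f`:
the sum of the image `⁅k, e⁆` and the centralizer `p^f = p ∩ ker(ad f)` is all of `p`,
and their intersection is zero. -/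
theorem stmt_10 (K : Type*) [Field K] [CharZero K]
    (L : Type*) [LieRing L] [LieAlgebra K L] [Module.Finite K L]
    (θ : L →ₗ⁅K⁆ L) (hinv : ∀ x, θ (θ x) = x)
    (h e f : L) (t : IsSl2Triple h e f)
    (hh : θ h = h) (he : θ e = -e) (hf : θ f = -f) :
    let kSub : Submodule K L := Module.End.eigenspace (θ : L →ₗ[K] L) 1
    let pSub : Submodule K L := Module.End.eigenspace (θ : L →ₗ[K] L) (-1)
    let pf : Submodule K L := pSub ⊓ LinearMap.ker ((LieAlgebra.ad K L) f)
    let bracketKE : Submodule K L := Submodule.map ((LieAlgebra.ad K L) e) kSub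
    bracketKE ⊔ pf = pSub ∧ bracketKE ⊓ pf = ⊥ := by
  intro kSub pSub pf bracketKE
  set E : Module.End K L := (LieAlgebra.ad K L) e with hE
  set F : Module.End K L := (LieAlgebra.ad K L) f with hF
  set H : Module.End K L := (LieAlgebra.ad K L) h with hH
  have adlie : ∀ x y : L, (LieAlgebra.ad K L) ⁅x, y⁆ =
      (LieAlgebra.ad K L) x * (LieAlgebra.ad K L) y
        - (LieAlgebra.ad K L) y * (LieAlgebra.ad K L) x := by
    intro x y
    ext z
    simp only [LinearMap.sub_apply, Module.End.mul_apply, LieAlgebra.ad_apply, lie_lie]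
  have adneg : ∀ x : L, (LieAlgebra.ad K L) (-x) = -((LieAlgebra.ad K L) x) :=
    fun x => ((LieAlgebra.ad K L) : L →ₗ[K] Module.End K L).map_neg x
  have adsmul : ∀ (c : K) (x : L), (LieAlgebra.ad K L) (c • x) = c • ((LieAlgebra.ad K L) x) :=
    fun c x => ((LieAlgebra.ad K L) : L →ₗ[K] Module.End K L).map_smul c x
  have hHE : H * E - E * H = (2:K) • E := by
    rw [hH, hE, ← adlie, t.lie_h_e_smul (R := K), adsmul]
  have hHF : H * F - F * H = -((2:K) • F) := by
    rw [hH, hF, ← adlie, t.lie_lie_smul_f (R := K), adneg, adsmul]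
  have hEF : E * F - F * E = H := by
    rw [hE, hF, hH, ← adlie, t.lie_e_f]
  have hinf := Stmt10Aux.main_inf hHE hHF hEF
  have hsup := Stmt10Aux.main_sup hHE hHF hEF
  have hmemk : ∀ x : L, x ∈ kSub ↔ θ x = x := by
    intro x
    rw [Module.End.mem_eigenspace_iff, one_smul]
    rfl
  have hmemp : ∀ x : L, x ∈ pSub ↔ θ x = -x := by
    intro x
    rw [Module.End.mem_eigenspace_iff, neg_smul, one_smul]
    rfl
  have θadd : ∀ a b : L, θ (a + b) = θ a + θ b := fun a b => (θ : L →ₗ[K] L).map_add a b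
  have θsub : ∀ a b : L, θ (a - b) = θ a - θ b := fun a b => (θ : L →ₗ[K] L).map_sub a b
  have θsmul : ∀ (c : K) (a : L), θ (c • a) = c • θ a :=
    fun c a => (θ : L →ₗ[K] L).map_smul c a
  have hEapp : ∀ x : L, E x = ⁅e, x⁆ := fun x => rfl
  have hFapp : ∀ x : L, F x = ⁅f, x⁆ := fun x => rfl
  have hθE : ∀ x : L, θ (E x) = -(E (θ x)) := by
    intro x
    rw [hEapp, hEapp, LieHom.map_lie, he, neg_lie]
  have hθF : ∀ x : L, F (θ x) = -(θ (F x)) := by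
    intro x
    have h1 : θ ⁅f, x⁆ = ⁅θ f, θ x⁆ := LieHom.map_lie θ f x
    rw [hf, neg_lie] at h1
    rw [hFapp, hFapp, ← neg_neg ⁅f, θ x⁆, ← h1]
  constructor
  · apply le_antisymm
    · apply sup_le
      · rintro w hw
        obtain ⟨x, hx, rfl⟩ := Submodule.mem_map.mp hw
        rw [hmemk] at hx
        rw [hmemp]
        show θ (E x) = -(E x)
        rw [hθE, hx]
      · exact inf_le_left
    · intro v hv
      have hv' : θ v = -v := (hmemp v).mp hv
      have hvtop : v ∈ LinearMap.range E ⊔ LinearMap.ker F := by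
        rw [hsup]
        trivial
      obtain ⟨p1, hp1, p2, hp2, hpsum⟩ := Submodule.mem_sup.mp hvtop
      obtain ⟨x, hx⟩ := hp1
      rw [LinearMap.mem_ker] at hp2
      have e1 : E x + p2 = v := by rw [hx]; exact hpsum
      have e2 : E (θ x) - θ p2 = v := by
        have h1 : θ (E x + p2) = -v := by rw [e1, hv']
        rw [θadd, hθE] at h1
        have h2 : E (θ x) - θ p2 = -(-(E (θ x)) + θ p2) := by abel
        rw [h2, h1, neg_neg]
      refine Submodule.mem_sup.mpr ⟨E ((2⁻¹ : K) • (x + θ x)), ?_,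
        (2⁻¹ : K) • (p2 - θ p2), ?_, ?_⟩
      · refine Submodule.mem_map.mpr ⟨(2⁻¹ : K) • (x + θ x), ?_, rfl⟩
        rw [hmemk]
        show θ ((2⁻¹ : K) • (x + θ x)) = (2⁻¹ : K) • (x + θ x)
        rw [θsmul, θadd, hinv x, add_comm (θ x) x]
      · refine Submodule.mem_inf.mpr ⟨?_, ?_⟩
        · rw [hmemp]
          show θ ((2⁻¹ : K) • (p2 - θ p2)) = -((2⁻¹ : K) • (p2 - θ p2))
          rw [θsmul, θsub, hinv p2, ← smul_neg]
          congr 1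
          abel
        · rw [LinearMap.mem_ker, map_smul, map_sub, hp2, hθF, hp2]
          simp
      · rw [map_smul, ← smul_add]
        have h3 : E (x + θ x) + (p2 - θ p2) = (E x + p2) + (E (θ x) - θ p2) := by
          rw [map_add]
          abel
        rw [h3, e1, e2, ← two_smul K v, smul_smul, inv_mul_cancel₀ (two_ne_zero), one_smul]
  · rw [eq_bot_iff]
    intro w hw
    obtain ⟨hw1, hw2⟩ := Submodule.mem_inf.mp hw
    have h1 : w ∈ LinearMap.ker F ⊓ LinearMap.range E :=
      Submodule.mem_inf.mpr ⟨(Submodule.mem_inf.mp hw2).2, LinearMap.map_le_range hw1⟩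
    rw [hinf] at h1
    exact h1
end
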